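/- Let Y := {y : ℤ → ℝ | y is bounded and lim_{i→+∞} y(i) exists} and X := {x ∈ Y | ∑_{k=1}^∞ x(−k)/2^k = lim_{i→+∞} x(i)}, both ordered pointwise. Let z : ℤ → ℝ be defined by z(−1) = 1 and z(k) = 0 for all k ≠ −1; then z ∈ Y. Then for every subset S ⊆ X one has Sᵈ ≠ {z}ᵈ, where for M ⊆ Y the disjoint complement is Mᵈ := {y ∈ Y | ∀ m ∈ M, min(|y(i)|, |m(i)|) = 0 for all i ∈ ℤ}. In particular, X is not fordable in Y. -/

import Mathlib

open Filter Topology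

/-- Membership in the vector lattice `Y` of Example 10: bounded functions `y : ℤ → ℝ` such
that `lim_{i→∞} y(i)` exists. -/
def MemY11 (y : ℤ → ℝ) : Prop :=
  (∃ M : ℝ, ∀ i : ℤ, |y i| ≤ M) ∧ ∃ L : ℝ, Tendsto y atTop (𝓝 L)

/-- Membership in the order dense subspace `X` of `Y`: those `x ∈ Y` with
`∑_{k=1}^∞ x(-k)/2^k = lim_{i→∞} x(i)`. -/
def MemX11 (x : ℤ → ℝ) : Prop :=
  MemY11 x ∧ Tendsto x atTop (𝓝 (∑' k : ℕ, x (-((k : ℤ) + 1)) / 2 ^ (k + 1)))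

/-- Disjoint complement within `Y` of a set `M` of functions: all `y ∈ Y` disjoint from
every element of `M`, where disjointness in `Y` is pointwise: `min(|y i|, |m i|) = 0`. -/
def DComp11 (M : Set (ℤ → ℝ)) : Set (ℤ → ℝ) :=
  {y : ℤ → ℝ | MemY11 y ∧ ∀ m ∈ M, ∀ i : ℤ, min |y i| |m i| = 0}

/-- The element `z ∈ Y` with `z(-1) = 1` and `z(k) = 0` for `k ≠ -1`. -/
def z11 : ℤ → ℝ := fun k => if k = -1 then 1 else 0

lemma indicatorMemY11 (i0 : ℤ) : MemY11 (fun k => if k = i0 then (1:ℝ) else 0) := by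
  constructor
  · exact ⟨1, fun i => by dsimp only; split <;> simp⟩
  · refine ⟨0, Tendsto.congr' ?_ tendsto_const_nhds⟩
    filter_upwards [eventually_gt_atTop i0] with i hi
    simp [hi.ne']

/-- `z ∈ Y`, and for every subset `S ⊆ X` one has `Sᵈ ≠ {z}ᵈ`.
In particular `X` is not fordable in `Y`. -/
theorem statement11 :
    MemY11 z11 ∧
      ∀ S : Set (ℤ → ℝ), (∀ s ∈ S, MemX11 s) → DComp11 S ≠ DComp11 {z11} := by
  have hzY : MemY11 z11 := by
    exact indicatorMemY11 (-1)
  refine ⟨hzY, fun S hS heq => ?_⟩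
  -- z11 is not in DComp11 {z11}
  have hz_not : z11 ∉ DComp11 {z11} := by
    intro ⟨_, h⟩
    have := h z11 rfl (-1)
    simp [z11] at this
  rw [← heq] at hz_not
  -- so there is s ∈ S and i with min |z11 i| |s i| ≠ 0, forcing i = -1 and s (-1) ≠ 0
  simp only [DComp11, Set.mem_setOf_eq, not_and, not_forall] at hz_not
  obtain ⟨s, hsS, i, hmin⟩ := hz_not hzY
  have hi : i = -1 := by
    by_contra h
    exact hmin (by simp [z11, h])
  subst hi
  have hs1 : s (-1) ≠ 0 := by
    intro h
    exact hmin (by simp [h])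
  -- s is nonzero at some i0 ≠ -1
  have hX := hS s hsS
  have h_exists : ∃ i0 : ℤ, i0 ≠ -1 ∧ s i0 ≠ 0 := by
    by_contra h
    push_neg at h
    have hzero : ∀ i : ℤ, i ≠ -1 → s i = 0 := fun i hi => by
      by_contra h'; exact h' (h i hi)
    have htend0 : Tendsto s atTop (𝓝 0) := by
      refine Tendsto.congr' ?_ tendsto_const_nhds
      filter_upwards [eventually_gt_atTop (-1 : ℤ)] with i hi
      exact (hzero i hi.ne').symm
    have hsum : (∑' k : ℕ, s (-((k : ℤ) + 1)) / 2 ^ (k + 1)) = s (-1) / 2 := by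
      rw [tsum_eq_single 0 (fun b hb => ?_)]
      · norm_num
      · rw [hzero _ (by omega : -((b:ℤ)+1) ≠ -1)]
        simp
    have := tendsto_nhds_unique htend0 (hsum ▸ hX.2)
    have : s (-1) = 0 := by linarith
    exact hs1 this
  obtain ⟨i0, hi0, hsi0⟩ := h_exists
  -- the indicator of i0 belongs to DComp11 {z11} but not to DComp11 S
  set y : ℤ → ℝ := fun k => if k = i0 then (1:ℝ) else 0 with hy
  have hyIn : y ∈ DComp11 {z11} := by
    refine ⟨indicatorMemY11 i0, fun m hm i => ?_⟩
    rw [Set.mem_singleton_iff] at hm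
    subst hm
    by_cases h : i = i0
    · subst h; simp [hy, z11, hi0]
    · simp [hy, h]
  rw [← heq] at hyIn
  have h2 : min |(1:ℝ)| |s i0| = 0 := by simpa [hy] using hyIn.2 s hsS i0
  rw [abs_one, min_eq_iff] at h2
  rcases h2 with h | h
  · linarith [h.1]
  · exact hsi0 (abs_eq_zero.mp h.1)
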